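/- With the su(2) basis above and α ∈ (0, π/2), the operator (Ad_{x_α}+1)/(Ad_{x_α}−1) restricted to g_α^⊥ is the zero transformation, where x_α = [[i sin α, cos α],[−cos α, −i sin α]] ∈ SU(2); equivalently, (Ad_{x_α} + 1) vanishes on g_α^⊥ = Span{tan(α)·e₁ − e₂, e₃}. -/

import Mathlib

open Matrix Complex Real

noncomputable def su2e1 : Matrix (Fin 2) (Fin 2) ℂ := !![0, I; I, 0]
noncomputable def su2e2 : Matrix (Fin 2) (Fin 2) ℂ := !![I, 0; 0, -I]
noncomputable def su2e3 : Matrix (Fin 2) (Fin 2) ℂ := !![0, 1; -1, 0]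

/-- The point of the conjugacy class `C ≅ S²` corresponding to `(sin α, 0, cos α)` under
`(x,y,z) ↔ [[ix, y+iz],[−y+iz, −ix]]`; an element of `SU(2)`, so `Ad_{x_α} u = x_α u x_αᴴ`. -/
noncomputable def su2xα (α : ℝ) : Matrix (Fin 2) (Fin 2) ℂ :=
  !![I * (Real.sin α : ℂ), I * (Real.cos α : ℂ);
     I * (Real.cos α : ℂ), -(I * (Real.sin α : ℂ))]

/-- `Ad_{x_α} + 1` vanishes on `g_α^⊥ = Span{tan(α)·e₁ − e₂, e₃}`; i.e. the
operator `(Ad_{x_α}+1)/(Ad_{x_α}−1)` restricted to `g_α^⊥` is zero. -/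
theorem su2_ad_plus_one_vanishes_on_orthocomplement (α : ℝ)
    (hα : α ∈ Set.Ioo 0 (π/2)) :
    su2xα α * (Real.tan α • su2e1 - su2e2) * (su2xα α)ᴴ
        = -(Real.tan α • su2e1 - su2e2)
      ∧ su2xα α * su2e3 * (su2xα α)ᴴ = -su2e3 := by
  have hc : Real.cos α ≠ 0 :=
    (Real.cos_pos_of_mem_Ioo ⟨by linarith [hα.1, Real.pi_pos], hα.2⟩).ne'
  have hI3 : (I : ℂ) ^ 3 = -I := by
    rw [pow_succ, Complex.I_sq]; ring
  obtain ⟨s, hs⟩ : ∃ s : ℂ, ((Real.sin α : ℝ) : ℂ) = s := ⟨_, rfl⟩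
  obtain ⟨c, hcc⟩ : ∃ c : ℂ, ((Real.cos α : ℝ) : ℂ) = c := ⟨_, rfl⟩
  have hc' : c ≠ 0 := hcc ▸ (by exact_mod_cast hc)
  have hstars : (starRingEnd ℂ) s = s := by rw [← hs]; exact Complex.conj_ofReal _
  have hstarc : (starRingEnd ℂ) c = c := by rw [← hcc]; exact Complex.conj_ofReal _
  have hpyth : s ^ 2 + c ^ 2 = 1 := by
    rw [← hs, ← hcc]
    exact_mod_cast congrArg (Complex.ofReal ·) (Real.sin_sq_add_cos_sq α)
  refine ⟨?_, ?_⟩ <;> ext i j <;> fin_cases i <;> fin_cases j <;>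
    · simp only [su2xα, su2e1, su2e2, su2e3, Matrix.mul_apply, Fin.sum_univ_two,
        Matrix.conjTranspose_apply, Matrix.sub_apply, Matrix.smul_apply, Matrix.neg_apply,
        Matrix.cons_val', Matrix.cons_val_zero, Matrix.cons_val_one, Matrix.head_cons,
        Matrix.head_fin_const, Matrix.empty_val', Matrix.cons_val_fin_one,
        star_mul', Complex.star_def, Complex.conj_ofReal, Complex.conj_I,
        Real.tan_eq_sin_div_cos, Complex.ofReal_div, smul_eq_mul, hs, hcc,
        Matrix.of_apply, Fin.zero_eta, Fin.mk_one, Fin.isValue, Complex.real_smul, map_mul, map_neg]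
      field_simp
      try simp only [← Complex.ofReal_sin, ← Complex.ofReal_cos, hs, hcc]
      try simp only [hstars, hstarc, hI3, Complex.I_sq]
      try field_simp
      first
        | ring1
        | linear_combination (-I^3*c^2)*hpyth + (-I*c^2)*Complex.I_sq
        | linear_combination (I^3*s*c^2)*hpyth + (I*s*c^2)*Complex.I_sq
        | linear_combination (I^3*c^2)*hpyth + (I*c^2)*Complex.I_sq
        | linear_combination (I^2)*hpyth + Complex.I_sq
        | linear_combination (-(I^2))*hpyth + (-1 : ℂ)*Complex.I_sq
        | linear_combination (I*c)*hpyth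
        | linear_combination (-(I*c))*hpyth
        | linear_combination (-(I*s))*hpyth
        | linear_combination hpyth
        | linear_combination (-1 : ℂ)*hpyth
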